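/- arXiv:2511.09434 — 2 statements merged into one kernel-verified Lean document; each statement's English description precedes it below -/
import Mathlib

section
/- For fixed ϱ, λ ∈ (0, 1/2], the function p ↦ q⋆(p, ϱ, λ) = (1 - p²/((1-p)²(1-ϱ)))·(1 - p²(λ-ϱ)/(1-ϱ)) is strictly decreasing on [0, p_c(ϱ)). -/
set_option maxHeartbeats 1000000

theorem qstar_strictAnti (ϱ lam : ℝ)
    (hϱ : ϱ ∈ Set.Ioc (0:ℝ) (1/2)) (hlam : lam ∈ Set.Ioc (0:ℝ) (1/2)) :
    StrictAntiOn
      (fun p : ℝ =>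
        (1 - p^2 / ((1 - p)^2 * (1 - ϱ))) * (1 - p^2 * (lam - ϱ) / (1 - ϱ)))
      (Set.Ico (0:ℝ) ((Real.sqrt (1 - ϱ) - (1 - ϱ)) / ϱ)) := by
  obtain ⟨hϱ0, hϱ2⟩ := hϱ
  obtain ⟨hl0, hl2⟩ := hlam
  have hs : (0:ℝ) < 1 - ϱ := by linarith
  set r := Real.sqrt (1 - ϱ) with hr
  have hr2 : r ^ 2 = 1 - ϱ := Real.sq_sqrt hs.le
  have hr0 : 0 < r := Real.sqrt_pos.mpr hs
  have hr1 : r < 1 := by nlinarith [hr2]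
  -- key bounds for points in the interval
  have hbound : ∀ x : ℝ, x ∈ Set.Ico (0:ℝ) ((r - (1 - ϱ)) / ϱ) →
      x < 1 ∧ x ^ 2 < (1 - x) ^ 2 * (1 - ϱ) := by
    intro x ⟨hx0, hxlt⟩
    have h1 : x * ϱ < r - (1 - ϱ) := (lt_div_iff₀ hϱ0).mp hxlt
    have h2 : x * (1 - r ^ 2) < r - r ^ 2 := by nlinarith [hr2]
    have h3 : x * (1 + r) < r := by nlinarith [hr1]
    have hx1 : x < 1 := by nlinarith
    have hxr : x < r * (1 - x) := by nlinarith
    refine ⟨hx1, ?_⟩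
    have : x ^ 2 < (r * (1 - x)) ^ 2 := by nlinarith
    calc x ^ 2 < (r * (1 - x)) ^ 2 := this
      _ = (1 - x) ^ 2 * (1 - ϱ) := by rw [mul_pow, hr2]; ring
  apply strictAntiOn_of_deriv_neg (convex_Ico _ _)
  · apply ContinuousOn.mul
    · apply ContinuousOn.sub continuousOn_const
      apply ContinuousOn.div (by fun_prop) (by fun_prop)
      intro x hx
      have := (hbound x hx).1
      have h1x : (1 - x) ≠ 0 := by intro h; nlinarith
      positivity
    · fun_prop
  · intro x hx
    rw [interior_Ico] at hx
    obtain ⟨hx0, hxlt⟩ := hx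
    obtain ⟨hx1, hxsq⟩ := hbound x ⟨hx0.le, hxlt⟩
    have h1x : (0:ℝ) < 1 - x := by linarith
    have h1xne : (1 - x) ≠ 0 := by positivity
    have hsne : (1 - ϱ) ≠ 0 := by positivity
    set c := lam - ϱ with hc
    have hc1 : -(1/2) < c := by rw [hc]; linarith
    have hc2 : c ≤ 1/2 := by rw [hc]; linarith
    have hden : (1 - x) ^ 2 * (1 - ϱ) ≠ 0 := by positivity
    -- derivative of the first factor
    have hd1 : HasDerivAt (fun p : ℝ => 1 - p ^ 2 / ((1 - p) ^ 2 * (1 - ϱ)))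
        (-(2 * x / ((1 - x) ^ 3 * (1 - ϱ)))) x := by
      have hq : HasDerivAt (fun p : ℝ => p ^ 2 / ((1 - p) ^ 2 * (1 - ϱ)))
        (2 * x / ((1 - x) ^ 3 * (1 - ϱ))) x := by
        have hnum : HasDerivAt (fun p : ℝ => p ^ 2) (2 * x) x := by
          simpa using hasDerivAt_pow 2 x
        have hd : HasDerivAt (fun p : ℝ => (1 - p) ^ 2 * (1 - ϱ))
            ((2 * (1 - x) * (-1)) * (1 - ϱ)) x := by
          have : HasDerivAt (fun p : ℝ => (1 - p)) (-1) x := by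
            simpa using (hasDerivAt_id x).const_sub 1
          simpa using (this.pow 2).mul_const (1 - ϱ)
        have := hnum.div hd hden
        refine this.congr_deriv ?_
        field_simp
        ring
      simpa using hq.const_sub 1
    have hd2 : HasDerivAt (fun p : ℝ => 1 - p ^ 2 * c / (1 - ϱ))
        (-(2 * x * c / (1 - ϱ))) x := by
      have hnum : HasDerivAt (fun p : ℝ => p ^ 2) (2 * x) x := by
        simpa using hasDerivAt_pow 2 x
      simpa using ((hnum.mul_const c).div_const (1 - ϱ)).const_sub 1
    have hF := hd1.mul hd2
    erw [hF.deriv]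
    -- now show the derivative value is negative
    have heq : -(2 * x / ((1 - x) ^ 3 * (1 - ϱ))) * (1 - x ^ 2 * c / (1 - ϱ))
        + (1 - x ^ 2 / ((1 - x) ^ 2 * (1 - ϱ))) * -(2 * x * c / (1 - ϱ))
        = -((2 * x / ((1 - x) ^ 3 * (1 - ϱ))) *
            ((1 - x ^ 2 * c / (1 - ϱ))
              + c * (1 - x ^ 2 / ((1 - x) ^ 2 * (1 - ϱ))) * (1 - x) ^ 3)) := by
      field_simp
      ring
    rw [heq]
    set u := 1 - x ^ 2 / ((1 - x) ^ 2 * (1 - ϱ)) with hu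
    set v := 1 - x ^ 2 * c / (1 - ϱ) with hv
    have hu0 : 0 < u := by
      rw [hu, sub_pos, div_lt_one (by positivity)]
      exact hxsq
    have hu1 : u ≤ 1 := by
      rw [hu]
      have : 0 ≤ x ^ 2 / ((1 - x) ^ 2 * (1 - ϱ)) := by positivity
      linarith
    have hv1 : c ≤ 0 → 1 ≤ v := by
      intro hcneg
      rw [hv]
      have : x ^ 2 * c / (1 - ϱ) ≤ 0 :=
        div_nonpos_of_nonpos_of_nonneg (by nlinarith) hs.le
      linarith
    have hv0 : 0 < c → 0 < v := by
      intro hcpos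
      rw [hv, sub_pos, div_lt_one hs]
      nlinarith
    have hbr : 0 < v + c * u * (1 - x) ^ 3 := by
      clear hF hd1 hd2 heq
      clear hu hv
      clear_value u v
      have ht : 0 < u * (1 - x) ^ 3 := by positivity
      have ht1 : u * (1 - x) ^ 3 ≤ 1 := by
        have h3 : (1 - x) ^ 3 ≤ 1 :=
          pow_le_one₀ h1x.le (by linarith : (1:ℝ) - x ≤ 1)
        nlinarith
      rcases le_or_gt c 0 with hcneg | hcpos
      · have := hv1 hcneg
        nlinarith
      · have := hv0 hcpos
        nlinarith
    have hpos : 0 < 2 * x / ((1 - x) ^ 3 * (1 - ϱ)) := by positivity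
    have := mul_pos hpos hbr
    linarith
end

section
/- Let V be a finite set with out-degrees (d⁺ₓ)ₓ∈V all ≥ 2, m = Σₓ d⁺ₓ, and suppose Σₓ (d⁻ₓ/m)(1/d⁺ₓ) = ϱ and (1/|V|)Σₓ 1/d⁺ₓ = λ. For 0 ≤ p < p_c(ϱ) set z⋆ = p²/((1-p)²(1-ϱ)). Then (1/|V|) Σₓ (1 - (p₀(d⁺ₓ) + p₁(d⁺ₓ)z⋆ + p₂(d⁺ₓ)z⋆²)) = (1 - z⋆)·(1 - p²(λ - ϱ)/(1-ϱ)) = q⋆(p, ϱ, λ), where p₀(d)=p², p₁(d)=(1-p)(2(1-1/d)p+(1/d)(1+p)), p₂(d)=(1-1/d)(1-p)². -/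
theorem average_survival_eq_qstar
    {V : Type*} [Fintype V] [Nonempty V]
    (din dout : V → ℕ) (hdout : ∀ x, 2 ≤ dout x)
    (m : ℕ) (hm : (∑ x, dout x) = m)
    (ϱ lam p : ℝ)
    (hϱ : (∑ x, ((din x : ℝ) / m) * (1 / (dout x : ℝ))) = ϱ)
    (hlam : ((1 : ℝ) / Fintype.card V) * (∑ x, 1 / (dout x : ℝ)) = lam)
    (hϱmem : ϱ ∈ Set.Ioc (0:ℝ) (1/2))
    (hp : 0 ≤ p) (hpc : p < (Real.sqrt (1 - ϱ) - (1 - ϱ)) / ϱ) :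
    ((1 : ℝ) / Fintype.card V) *
      (∑ x, (1 - (p^2
        + (1 - p) * (2 * (1 - 1/(dout x : ℝ)) * p + (1/(dout x : ℝ)) * (1 + p))
            * (p^2 / ((1 - p)^2 * (1 - ϱ)))
        + (1 - 1/(dout x : ℝ)) * (1 - p)^2
            * (p^2 / ((1 - p)^2 * (1 - ϱ)))^2)))
    = (1 - p^2 / ((1 - p)^2 * (1 - ϱ))) * (1 - p^2 * (lam - ϱ) / (1 - ϱ)) := by
  obtain ⟨hϱ0, hϱh⟩ := hϱmem
  have hϱ1 : (0:ℝ) < 1 - ϱ := by linarith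
  have hϱne : (1:ℝ) - ϱ ≠ 0 := ne_of_gt hϱ1
  -- p < 1
  have hsq : Real.sqrt (1 - ϱ) ≤ 1 := by
    exact Real.sqrt_le_one.mpr (by linarith)
  have hp1 : p < 1 := by
    have : (Real.sqrt (1 - ϱ) - (1 - ϱ)) / ϱ ≤ 1 := by
      rw [div_le_one hϱ0]; linarith
    linarith
  have hpne : (1:ℝ) - p ≠ 0 := by intro h; linarith
  set z : ℝ := p^2 / ((1 - p)^2 * (1 - ϱ)) with hz
  set A : ℝ := 1 - p^2 - 2*p*(1-p)*z - (1-p)^2*z^2 with hA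
  set B : ℝ := (1-p)^2*z*(z-1) with hB
  have key : ∀ x : V, (1 - (p^2
        + (1 - p) * (2 * (1 - 1/(dout x : ℝ)) * p + (1/(dout x : ℝ)) * (1 + p)) * z
        + (1 - 1/(dout x : ℝ)) * (1 - p)^2 * z^2))
      = A + B * (1/(dout x : ℝ)) := by
    intro x; rw [hA, hB]; ring
  have hN : (0:ℝ) < (Fintype.card V : ℝ) := by
    exact_mod_cast Fintype.card_pos
  have hNne : (Fintype.card V : ℝ) ≠ 0 := ne_of_gt hN
  calc ((1 : ℝ) / Fintype.card V) *
      (∑ x, (1 - (p^2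
        + (1 - p) * (2 * (1 - 1/(dout x : ℝ)) * p + (1/(dout x : ℝ)) * (1 + p)) * z
        + (1 - 1/(dout x : ℝ)) * (1 - p)^2 * z^2)))
      = ((1 : ℝ) / Fintype.card V) * (∑ x, (A + B * (1/(dout x : ℝ)))) := by
        rw [Finset.sum_congr rfl (fun x _ => key x)]
    _ = ((1 : ℝ) / Fintype.card V) * ((Fintype.card V : ℝ) * A
          + B * (∑ x, 1/(dout x : ℝ))) := by
        rw [Finset.sum_add_distrib, Finset.sum_const, ← Finset.mul_sum]
        simp [Finset.card_univ, nsmul_eq_mul]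
    _ = A + B * (((1 : ℝ) / Fintype.card V) * (∑ x, 1/(dout x : ℝ))) := by
        field_simp
    _ = A + B * lam := by rw [hlam]
    _ = (1 - z) * (1 - p^2 * (lam - ϱ) / (1 - ϱ)) := by
        rw [hA, hB, hz]
        field_simp
        ring
end
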